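/- Let X and Y be independent standard Gaussian random variables and let a, b be real numbers. Set W = X(aX + bY). Then for every positive integer p, E[|W - E[W]|^p] < (10 Var[W])^{p/2} * p!. -/

import Mathlib

open MeasureTheory ProbabilityTheory Real Finset
open scoped NNReal ENNReal

namespace MomentAux

noncomputable def gw (x : ℝ) : ℝ := Real.exp (-(1/2 : ℝ) * x ^ 2)

lemma integrable_pow_mul_gw (n : ℕ) :
    Integrable (fun x : ℝ => x ^ n * gw x) := by
  have h := integrable_rpow_mul_exp_neg_mul_sq (b := (1/2 : ℝ)) (by norm_num)
    (s := (n : ℝ)) (by exact_mod_cast neg_one_lt_zero.trans_le (Nat.cast_nonneg n))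
  simpa [gw, Real.rpow_natCast] using h

lemma hasDerivAt_gw (x : ℝ) : HasDerivAt gw (-x * gw x) x := by
  have h1 : HasDerivAt (fun x : ℝ => -(1/2 : ℝ) * x ^ 2) (-(1/2 : ℝ) * (2 * x)) x := by
    simpa using ((hasDerivAt_pow 2 x).const_mul (-(1/2 : ℝ)))
  have := h1.exp
  exact this.congr_deriv (by simp only [gw]; ring)

noncomputable def G (n : ℕ) : ℝ := ∫ x : ℝ, x ^ n * gw x

lemma G_rec (n : ℕ) : G (n + 2) = (n + 1) * G n := by
  have hderiv : ∀ x : ℝ, HasDerivAt (fun x : ℝ => x ^ (n+1) * gw x)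
      ((n+1 : ℝ) * x ^ n * gw x - x ^ (n+2) * gw x) x := by
    intro x
    have h := (hasDerivAt_pow (n+1) x).mul (hasDerivAt_gw x)
    refine h.congr_deriv ?_
    simp only [Nat.add_sub_cancel]
    push_cast
    ring
  have hint : Integrable (fun x : ℝ => (n+1 : ℝ) * x ^ n * gw x - x ^ (n+2) * gw x) := by
    have := ((integrable_pow_mul_gw n).const_mul ((n:ℝ)+1)).sub (integrable_pow_mul_gw (n+2))
    simpa [mul_assoc, Pi.sub_def] using this
  have h0 := integral_eq_zero_of_hasDerivAt_of_integrable hderiv hint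
    (integrable_pow_mul_gw (n+1))
  have hsplit : ∫ x : ℝ, ((n+1 : ℝ) * x ^ n * gw x - x ^ (n+2) * gw x)
      = (n+1 : ℝ) * G n - G (n+2) := by
    rw [integral_sub (by simpa [mul_assoc] using (integrable_pow_mul_gw n).const_mul ((n:ℝ)+1))
      (integrable_pow_mul_gw (n+2))]
    simp only [G, mul_assoc, integral_const_mul]
  rw [hsplit] at h0
  linarith

lemma G_zero : G 0 = Real.sqrt (2 * π) := by
  have h := integral_gaussian (1/2 : ℝ)
  simp only [G, gw, pow_zero, one_mul]
  rw [h]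
  rw [show π / (1/2) = 2 * π by ring]

lemma G_one : G 1 = 0 := by
  have hderiv : ∀ x : ℝ, HasDerivAt (fun x : ℝ => -gw x) (x ^ 1 * gw x) x := by
    intro x
    have := (hasDerivAt_gw x).neg
    exact this.congr_deriv (by ring)
  have h0 := integral_eq_zero_of_hasDerivAt_of_integrable hderiv (integrable_pow_mul_gw 1)
    ((integrable_pow_mul_gw 0).neg.congr (Filter.Eventually.of_forall (by simp)))
  simpa [G] using h0

lemma G_two : G 2 = Real.sqrt (2 * π) := by
  have := G_rec 0
  simp [G_zero] at this
  simpa using this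

lemma G_four : G 4 = 3 * Real.sqrt (2 * π) := by
  have h := G_rec 2
  rw [G_two] at h
  norm_num at h
  rw [h, Real.sqrt_mul (by norm_num)]

lemma G_nonneg (n : ℕ) : 0 ≤ G (2 * n) := by
  apply integral_nonneg
  intro x
  have h1 : (0:ℝ) ≤ x ^ (2*n) := by
    rw [pow_mul]; positivity
  exact mul_nonneg h1 (Real.exp_nonneg _)

lemma G_even_bound (p : ℕ) : G (2 * p) ≤ 2 ^ p * p.factorial * Real.sqrt (2 * π) := by
  induction p with
  | zero => simp [G_zero]
  | succ k ih =>
    have hrec : G (2 * (k+1)) = (2 * k + 1) * G (2 * k) := by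
      have := G_rec (2 * k)
      convert this using 2 <;> push_cast <;> ring
    rw [hrec]
    have h1 : ((2:ℝ) * k + 1) * G (2 * k) ≤ (2 * k + 2) * (2 ^ k * k.factorial * Real.sqrt (2 * π)) := by
      have hmono : ((2:ℝ) * k + 1) * G (2*k) ≤ (2 * k + 2) * G (2*k) := by
        nlinarith [G_nonneg k]
      refine hmono.trans ?_
      have : (0:ℝ) ≤ 2 * k + 2 := by positivity
      exact mul_le_mul_of_nonneg_left ih this
    refine h1.trans_eq ?_
    rw [Nat.factorial_succ]
    push_cast
    ring


lemma sqrt2pi_pos : 0 < Real.sqrt (2 * π) := Real.sqrt_pos.2 (by positivity)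

lemma pdf01_eq (x : ℝ) : gaussianPDFReal 0 1 x = (Real.sqrt (2 * π))⁻¹ * gw x := by
  simp only [gaussianPDFReal, gw, NNReal.coe_one, mul_one, sub_zero]
  congr 1
  ring_nf

noncomputable abbrev μ01 : Measure ℝ := gaussianReal 0 1

lemma integral_gaussian01 (f : ℝ → ℝ) :
    ∫ x, f x ∂μ01 = (Real.sqrt (2 * π))⁻¹ * ∫ x, f x * gw x := by
  have hrepr : gaussianPDF 0 1 = fun x => ((Real.toNNReal (gaussianPDFReal 0 1 x) : ℝ≥0) : ℝ≥0∞) := rfl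
  rw [μ01, gaussianReal_of_var_ne_zero 0 one_ne_zero, hrepr,
    integral_withDensity_eq_integral_smul ((measurable_gaussianPDFReal 0 1).real_toNNReal) f,
    ← integral_const_mul]
  congr 1
  ext x
  rw [NNReal.smul_def, Real.coe_toNNReal _ (gaussianPDFReal_nonneg 0 1 x), smul_eq_mul,
    pdf01_eq]
  ring

lemma pdf_toReal (x : ℝ) :
    (gaussianPDF 0 1 x).toReal = (Real.sqrt (2 * π))⁻¹ * gw x := by
  rw [gaussianPDF, ENNReal.toReal_ofReal (gaussianPDFReal_nonneg 0 1 x), pdf01_eq]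

lemma integrable_gaussian01_iff (f : ℝ → ℝ) :
    Integrable f μ01 ↔ Integrable (fun x => f x * gw x) := by
  rw [μ01, gaussianReal_of_var_ne_zero 0 one_ne_zero,
    integrable_withDensity_iff (measurable_gaussianPDF 0 1)
      (Filter.Eventually.of_forall fun x => ENNReal.ofReal_lt_top)]
  constructor
  · intro h
    have h2 := (h.const_mul (Real.sqrt (2 * π)))
    refine h2.congr (Filter.Eventually.of_forall fun x => ?_)
    show Real.sqrt (2 * π) * (f x * (gaussianPDF 0 1 x).toReal) = f x * gw x
    rw [pdf_toReal]
    field_simp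
  · intro h
    have h2 := (h.const_mul (Real.sqrt (2 * π))⁻¹)
    refine h2.congr (Filter.Eventually.of_forall fun x => ?_)
    show (Real.sqrt (2 * π))⁻¹ * (f x * gw x) = f x * (gaussianPDF 0 1 x).toReal
    rw [pdf_toReal]
    ring

lemma integrable_pow_gaussian01 (n : ℕ) : Integrable (fun x => x ^ n) μ01 :=
  (integrable_gaussian01_iff _).2 (integrable_pow_mul_gw n)

lemma integral_pow_gaussian01 (n : ℕ) :
    ∫ x, x ^ n ∂μ01 = (Real.sqrt (2 * π))⁻¹ * G n := integral_gaussian01 _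

lemma integral_id_gaussian01 : ∫ x, x ∂μ01 = 0 := by
  have h := integral_pow_gaussian01 1
  simp only [pow_one] at h
  rw [h, G_one, mul_zero]

lemma integral_sq_gaussian01 : ∫ x, x ^ 2 ∂μ01 = 1 := by
  rw [integral_pow_gaussian01 2, G_two, inv_mul_cancel₀ sqrt2pi_pos.ne']

lemma integral_pow4_gaussian01 : ∫ x, x ^ 4 ∂μ01 = 3 := by
  rw [integral_pow_gaussian01 4, G_four]
  field_simp

lemma integral_even_pow_gaussian01_le (p : ℕ) :
    ∫ x, x ^ (2 * p) ∂μ01 ≤ 2 ^ p * p.factorial := by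
  rw [integral_pow_gaussian01 (2 * p)]
  have h := G_even_bound p
  rw [inv_mul_le_iff₀ sqrt2pi_pos]
  linarith [h]

lemma integrable_abs_pow_gaussian01 (n : ℕ) : Integrable (fun x => |x| ^ n) μ01 := by
  rw [integrable_gaussian01_iff]
  refine ((integrable_pow_mul_gw n).abs).congr (Filter.Eventually.of_forall fun x => ?_)
  show |x ^ n * gw x| = |x| ^ n * gw x
  rw [abs_mul, abs_pow, abs_of_nonneg (le_of_lt (Real.exp_pos _) : (0:ℝ) ≤ gw x)]

lemma abs_pow_sq_integral_le (p : ℕ) :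
    (∫ x, |x| ^ p ∂μ01) ^ 2 ≤ 2 ^ p * p.factorial := by
  have hmem : MemLp (fun x : ℝ => |x| ^ p) 2 μ01 := by
    rw [memLp_two_iff_integrable_sq ((measurable_id'.abs.pow_const p).aestronglyMeasurable)]
    refine (integrable_pow_gaussian01 (2 * p)).congr
      (Filter.Eventually.of_forall fun x => ?_)
    show x ^ (2 * p) = ((fun x : ℝ => |x| ^ p) ^ 2) x
    simp only [Pi.pow_apply]
    rw [← abs_pow, sq_abs, ← pow_mul, mul_comm p 2]
  have hv := variance_nonneg (fun x : ℝ => |x| ^ p) μ01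
  rw [variance_eq_sub hmem] at hv
  have h2 : (μ01[(fun x : ℝ => |x| ^ p) ^ 2]) = ∫ x, x ^ (2 * p) ∂μ01 := by
    congr 1
    ext x
    show ((fun x : ℝ => |x| ^ p) ^ 2) x = x ^ (2 * p)
    simp only [Pi.pow_apply]
    rw [← abs_pow, sq_abs, ← pow_mul, mul_comm p 2]
  rw [h2] at hv
  have := integral_even_pow_gaussian01_le p
  nlinarith [this, hv]


lemma S_bound (p : ℕ) :
    ∑ k ∈ range (p+1), p.choose k * 2^k * k.factorial ≤ 3^p * p.factorial := by
  induction p with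
  | zero => simp
  | succ q ih =>
    have hsplit : ∑ k ∈ range (q+2), (q+1).choose k * 2^k * k.factorial
        = (∑ i ∈ range (q+1), (q+1).choose (i+1) * 2^(i+1) * (i+1).factorial) + 1 := by
      rw [Finset.sum_range_succ' (fun k => (q+1).choose k * 2^k * k.factorial) (q+1)]
      simp
    have hchoose : ∀ i, (q+1).choose (i+1) = q.choose i + q.choose (i+1) :=
      fun i => Nat.choose_succ_succ q i
    have hterm : ∀ i ∈ range (q+1),
        (q+1).choose (i+1) * 2^(i+1) * (i+1).factorial
        ≤ (2 * (q+1)) * (q.choose i * 2^i * i.factorial)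
          + q.choose (i+1) * 2^(i+1) * (i+1).factorial := by
      intro i hi
      rw [hchoose i, Nat.add_mul, Nat.add_mul]
      have h1 : q.choose i * 2^(i+1) * (i+1).factorial
          ≤ 2 * (q+1) * (q.choose i * 2^i * i.factorial) := by
        rw [pow_succ, Nat.factorial_succ]
        have hi' : i + 1 ≤ q + 1 := Nat.succ_le_succ (Nat.lt_succ_iff.1 (mem_range.1 hi))
        calc q.choose i * (2^i * 2) * ((i+1) * i.factorial)
            ≤ q.choose i * (2^i * 2) * ((q+1) * i.factorial) := by
              exact Nat.mul_le_mul_left _ (Nat.mul_le_mul_right _ hi')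
          _ = 2 * (q+1) * (q.choose i * 2^i * i.factorial) := by ring
      exact Nat.add_le_add_right h1 _
    have hsum2 : ∑ i ∈ range (q+1), q.choose (i+1) * 2^(i+1) * (i+1).factorial
        = (∑ k ∈ range (q+1), q.choose k * 2^k * k.factorial) - 1 := by
      have h := Finset.sum_range_succ' (fun k => q.choose k * 2^k * k.factorial) (q+1)
      have hlast : q.choose (q+1) * 2^(q+1) * (q+1).factorial = 0 := by
        simp [Nat.choose_eq_zero_of_lt (Nat.lt_succ_self q)]
      have h0 : q.choose 0 * 2^0 * Nat.factorial 0 = 1 := by simp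
      rw [Finset.sum_range_succ (fun k => q.choose k * 2^k * k.factorial) (q+1)] at h
      omega
    calc ∑ k ∈ range (q+2), (q+1).choose k * 2^k * k.factorial
        = (∑ i ∈ range (q+1), (q+1).choose (i+1) * 2^(i+1) * (i+1).factorial) + 1 := hsplit
      _ ≤ (∑ i ∈ range (q+1), ((2 * (q+1)) * (q.choose i * 2^i * i.factorial)
            + q.choose (i+1) * 2^(i+1) * (i+1).factorial)) + 1 := by
          exact Nat.add_le_add_right (Finset.sum_le_sum hterm) 1
      _ = (2 * (q+1)) * (∑ k ∈ range (q+1), q.choose k * 2^k * k.factorial)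
            + ((∑ i ∈ range (q+1), q.choose (i+1) * 2^(i+1) * (i+1).factorial) + 1) := by
          rw [Finset.sum_add_distrib, ← Finset.mul_sum]
          omega
      _ = (2 * (q+1) + 1) * (∑ k ∈ range (q+1), q.choose k * 2^k * k.factorial) := by
          have hpos : 1 ≤ ∑ k ∈ range (q+1), q.choose k * 2^k * k.factorial := by
            calc 1 = q.choose 0 * 2^0 * Nat.factorial 0 := by simp
              _ ≤ _ := Finset.single_le_sum (f := fun k => q.choose k * 2^k * k.factorial)
                  (fun _ _ => Nat.zero_le _) (mem_range.2 (Nat.succ_pos q))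
          rw [hsum2, Nat.sub_add_cancel hpos]
          ring
      _ ≤ (2 * (q+1) + 1) * (3^q * q.factorial) := Nat.mul_le_mul_left _ ih
      _ ≤ 3^(q+1) * (q+1).factorial := by
          rw [Nat.factorial_succ, pow_succ]
          calc (2 * (q+1) + 1) * (3^q * q.factorial)
              ≤ (3 * (q+1)) * (3^q * q.factorial) := by
                apply Nat.mul_le_mul_right
                omega
            _ = 3^q * 3 * ((q+1) * q.factorial) := by ring


lemma sq_add_one_pow_repr (p : ℕ) (x : ℝ) :
    (x^2 + 1)^p = ∑ k ∈ range (p+1), (p.choose k : ℝ) * x^(2*k) := by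
  rw [add_pow]
  refine Finset.sum_congr rfl fun k hk => ?_
  rw [one_pow, ← pow_mul, mul_comm 2 k]
  ring

lemma integrable_sq_add_one_pow (p : ℕ) :
    Integrable (fun x => (x^2 + 1)^p) μ01 := by
  have : (fun x : ℝ => (x^2 + 1)^p)
      = fun x => ∑ k ∈ range (p+1), (p.choose k : ℝ) * x^(2*k) := by
    ext x; exact sq_add_one_pow_repr p x
  rw [this]
  exact integrable_finset_sum _ fun k _ => (integrable_pow_gaussian01 (2*k)).const_mul _

lemma integral_sq_add_one_pow_le (p : ℕ) :
    ∫ x, (x^2 + 1)^p ∂μ01 ≤ (3:ℝ)^p * p.factorial := by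
  have hrw : ∫ x, (x^2 + 1)^p ∂μ01
      = ∑ k ∈ range (p+1), (p.choose k : ℝ) * ∫ x, x^(2*k) ∂μ01 := by
    simp_rw [sq_add_one_pow_repr p]
    rw [integral_finset_sum _ fun k _ => (integrable_pow_gaussian01 (2*k)).const_mul _]
    exact Finset.sum_congr rfl fun k _ => integral_const_mul _ _
  rw [hrw]
  calc ∑ k ∈ range (p+1), (p.choose k : ℝ) * ∫ x, x^(2*k) ∂μ01
      ≤ ∑ k ∈ range (p+1), (p.choose k : ℝ) * (2^k * k.factorial) := by
        refine Finset.sum_le_sum fun k _ => ?_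
        exact mul_le_mul_of_nonneg_left (integral_even_pow_gaussian01_le k)
          (by positivity)
    _ = ((∑ k ∈ range (p+1), p.choose k * 2^k * k.factorial : ℕ) : ℝ) := by
        push_cast; exact Finset.sum_congr rfl fun k _ => by ring
    _ ≤ ((3^p * p.factorial : ℕ) : ℝ) := by exact_mod_cast S_bound p
    _ = (3:ℝ)^p * p.factorial := by push_cast; ring

lemma abs_sq_sub_one_pow_le (p : ℕ) (x : ℝ) : |x^2 - 1|^p ≤ (x^2 + 1)^p := by
  apply pow_le_pow_left₀ (abs_nonneg _)
  rw [abs_le]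
  constructor <;> nlinarith [sq_nonneg x]

lemma integrable_abs_sq_sub_one_pow (p : ℕ) :
    Integrable (fun x => |x^2 - 1|^p) μ01 := by
  refine Integrable.mono' (integrable_sq_add_one_pow p)
    ((((measurable_id.pow_const 2).sub_const 1).abs.pow_const p).aestronglyMeasurable)
    (Filter.Eventually.of_forall fun x => ?_)
  rw [Real.norm_eq_abs, abs_of_nonneg (by positivity)]
  exact abs_sq_sub_one_pow_le p x

lemma integral_abs_sq_sub_one_pow_le (p : ℕ) :
    ∫ x, |x^2 - 1|^p ∂μ01 ≤ (3:ℝ)^p * p.factorial := by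
  refine le_trans (integral_mono (integrable_abs_sq_sub_one_pow p)
    (integrable_sq_add_one_pow p) fun x => abs_sq_sub_one_pow_le p x)
    (integral_sq_add_one_pow_le p)

lemma convex_step (p : ℕ) {u v A B : ℝ} (hu : 0 ≤ u) (hv : 0 ≤ v)
    (hA : 0 < A) (hB : 0 < B) :
    (u + v)^p ≤ (A/(A+B)) * ((A+B)/A * u)^p + (B/(A+B)) * ((A+B)/B * v)^p := by
  have hs : 0 < A + B := by linarith
  have hcx : ConvexOn ℝ (Set.Ici (0:ℝ)) (fun x : ℝ => x ^ p) := convexOn_pow p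
  have h := hcx.2 (Set.mem_Ici.2 (by positivity : (0:ℝ) ≤ (A+B)/A * u))
    (Set.mem_Ici.2 (by positivity : (0:ℝ) ≤ (A+B)/B * v))
    (by positivity : (0:ℝ) ≤ A/(A+B)) (by positivity : (0:ℝ) ≤ B/(A+B))
    (by field_simp)
  simp only [smul_eq_mul] at h
  have h1 : A/(A+B) * ((A+B)/A * u) + B/(A+B) * ((A+B)/B * v) = u + v := by
    field_simp
  rwa [h1] at h


lemma integrable_id_gaussian01 : Integrable (fun x : ℝ => x) μ01 := by
  simpa using integrable_pow_gaussian01 1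

end MomentAux

open MomentAux

/-- For `W = X (a X + b Y)` with `X, Y` independent standard Gaussians, the centered
absolute moments satisfy `E[|W - E[W]|^p] < (10 Var[W])^(p/2) * p!` for all positive
integers `p` (assuming `Var[W] > 0`). -/
theorem moment_bound_quadratic_gaussian
    {Ω : Type*} [MeasurableSpace Ω] (P : Measure Ω) [IsProbabilityMeasure P]
    (X Y : Ω → ℝ) (hX : Measurable X) (hY : Measurable Y)
    (hXY : IndepFun X Y P)
    (hXlaw : Measure.map X P = gaussianReal 0 1)
    (hYlaw : Measure.map Y P = gaussianReal 0 1)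
    (a b : ℝ) (W : Ω → ℝ) (hW : W = fun ω => X ω * (a * X ω + b * Y ω))
    (hvar : 0 < variance W P) :
    ∀ p : ℕ, 0 < p →
      ∫ ω, |W ω - P[W]| ^ p ∂P
        < (10 * variance W P) ^ ((p : ℝ) / 2) * (Nat.factorial p) := by
  have hWm : Measurable W := by
    rw [hW]; exact hX.mul ((hX.const_mul a).add (hY.const_mul b))
  -- transfer lemmas
  have keyX : ∀ f : ℝ → ℝ, Measurable f → ∫ ω, f (X ω) ∂P = ∫ x, f x ∂μ01 := by
    intro f hf
    rw [show (μ01 : Measure ℝ) = Measure.map X P from hXlaw.symm]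
    exact (integral_map hX.aemeasurable hf.aestronglyMeasurable).symm
  have keyY : ∀ f : ℝ → ℝ, Measurable f → ∫ ω, f (Y ω) ∂P = ∫ x, f x ∂μ01 := by
    intro f hf
    rw [show (μ01 : Measure ℝ) = Measure.map Y P from hYlaw.symm]
    exact (integral_map hY.aemeasurable hf.aestronglyMeasurable).symm
  have keyXint : ∀ f : ℝ → ℝ, Measurable f → Integrable f μ01 →
      Integrable (fun ω => f (X ω)) P := by
    intro f hf hfi
    rw [show (μ01 : Measure ℝ) = Measure.map X P from hXlaw.symm] at hfi
    exact (integrable_map_measure hf.aestronglyMeasurable hX.aemeasurable).1 hfi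
  have keyYint : ∀ f : ℝ → ℝ, Measurable f → Integrable f μ01 →
      Integrable (fun ω => f (Y ω)) P := by
    intro f hf hfi
    rw [show (μ01 : Measure ℝ) = Measure.map Y P from hYlaw.symm] at hfi
    exact (integrable_map_measure hf.aestronglyMeasurable hY.aemeasurable).1 hfi
  have prod_int : ∀ f g : ℝ → ℝ, Measurable f → Measurable g → Integrable f μ01 →
      Integrable g μ01 → Integrable (fun ω => f (X ω) * g (Y ω)) P := by
    intro f g hf hg hfi hgi
    have hind : IndepFun (f ∘ X) (g ∘ Y) P := hXY.comp hf hg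
    have := hind.integrable_mul (keyXint f hf hfi) (keyYint g hg hgi)
    exact this
  have prod_eq : ∀ f g : ℝ → ℝ, Measurable f → Measurable g →
      ∫ ω, f (X ω) * g (Y ω) ∂P = (∫ x, f x ∂μ01) * (∫ x, g x ∂μ01) := by
    intro f g hf hg
    have hind : IndepFun (f ∘ X) (g ∘ Y) P := hXY.comp hf hg
    have h := hind.integral_mul_eq_mul_integral ((hf.comp hX).aestronglyMeasurable)
      ((hg.comp hY).aestronglyMeasurable)
    simp only [Function.comp] at h
    calc ∫ ω, f (X ω) * g (Y ω) ∂P = (∫ ω, f (X ω) ∂P) * ∫ ω, g (Y ω) ∂P := h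
      _ = (∫ x, f x ∂μ01) * (∫ x, g x ∂μ01) := by rw [keyX f hf, keyY g hg]
  -- basic moments
  have hXsq_int : Integrable (fun ω => (X ω)^2) P :=
    keyXint _ (measurable_id.pow_const 2) (integrable_pow_gaussian01 2)
  have hXY_int : Integrable (fun ω => X ω * Y ω) P :=
    prod_int _ _ measurable_id measurable_id integrable_id_gaussian01 integrable_id_gaussian01
  have EXY : ∫ ω, X ω * Y ω ∂P = 0 := by
    have h : ∫ ω, X ω * Y ω ∂P = (∫ x, x ∂μ01) * (∫ x, x ∂μ01) :=
      prod_eq (fun x => x) (fun x => x) measurable_id measurable_id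
    rw [h, integral_id_gaussian01, mul_zero]
  have EX2 : ∫ ω, (X ω)^2 ∂P = 1 := by
    have h : ∫ ω, (X ω)^2 ∂P = ∫ x, x^2 ∂μ01 :=
      keyX (fun x => x^2) (measurable_id.pow_const 2)
    rw [h]; exact integral_sq_gaussian01
  -- mean of W
  have hWrepr : W = fun ω => a * (X ω)^2 + b * (X ω * Y ω) := by
    rw [hW]; ext ω; ring
  have hWint : Integrable W P := by
    rw [hWrepr]
    exact (hXsq_int.const_mul a).add (hXY_int.const_mul b)
  have EW : P[W] = a := by
    calc P[W] = ∫ ω, (a * (X ω)^2 + b * (X ω * Y ω)) ∂P := by rw [← hWrepr]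
      _ = a * ∫ ω, (X ω)^2 ∂P + b * ∫ ω, X ω * Y ω ∂P := by
          rw [integral_add (hXsq_int.const_mul a) (hXY_int.const_mul b),
            integral_const_mul, integral_const_mul]
      _ = a := by rw [EX2, EXY]; ring
  -- variance of W
  have hX4_int : Integrable (fun ω => (X ω)^4) P :=
    keyXint _ (measurable_id.pow_const 4) (integrable_pow_gaussian01 4)
  have hX3Y_int : Integrable (fun ω => (X ω)^3 * Y ω) P :=
    prod_int _ _ (measurable_id.pow_const 3) measurable_id
      (integrable_pow_gaussian01 3) integrable_id_gaussian01
  have hX2Y2_int : Integrable (fun ω => (X ω)^2 * (Y ω)^2) P :=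
    prod_int _ _ (measurable_id.pow_const 2) (measurable_id.pow_const 2)
      (integrable_pow_gaussian01 2) (integrable_pow_gaussian01 2)
  have hW2 : ∀ ω, (W ω)^2 = a^2 * (X ω)^4 + 2*a*b * ((X ω)^3 * Y ω)
      + b^2 * ((X ω)^2 * (Y ω)^2) := by
    intro ω; simp only [hW]; ring
  have hW2fun : (fun ω => (W ω)^2)
      = fun ω => a^2 * (X ω)^4 + 2*a*b * ((X ω)^3 * Y ω) + b^2 * ((X ω)^2 * (Y ω)^2) :=
    funext hW2
  have hW2int : Integrable (fun ω => (W ω)^2) P := by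
    rw [hW2fun]
    exact ((hX4_int.const_mul (a^2)).add (hX3Y_int.const_mul (2*a*b))).add
      (hX2Y2_int.const_mul (b^2))
  have EW2 : ∫ ω, (W ω)^2 ∂P = 3*a^2 + b^2 := by
    have h4 : ∫ ω, (X ω)^4 ∂P = 3 := by
      have h : ∫ ω, (X ω)^4 ∂P = ∫ x, x^4 ∂μ01 :=
        keyX (fun x => x^4) (measurable_id.pow_const 4)
      rw [h]; exact integral_pow4_gaussian01
    have h31 : ∫ ω, (X ω)^3 * Y ω ∂P = 0 := by
      have h : ∫ ω, (X ω)^3 * Y ω ∂P = (∫ x, x^3 ∂μ01) * (∫ x, x ∂μ01) :=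
        prod_eq (fun x => x^3) (fun x => x) (measurable_id.pow_const 3) measurable_id
      rw [h, integral_id_gaussian01, mul_zero]
    have h22 : ∫ ω, (X ω)^2 * (Y ω)^2 ∂P = 1 := by
      have h : ∫ ω, (X ω)^2 * (Y ω)^2 ∂P = (∫ x, x^2 ∂μ01) * (∫ x, x^2 ∂μ01) :=
        prod_eq (fun x => x^2) (fun x => x^2) (measurable_id.pow_const 2)
          (measurable_id.pow_const 2)
      rw [h, integral_sq_gaussian01, mul_one]
    calc ∫ ω, (W ω)^2 ∂P
        = ∫ ω, (a^2 * (X ω)^4 + 2*a*b * ((X ω)^3 * Y ω) + b^2 * ((X ω)^2 * (Y ω)^2)) ∂P := by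
          rw [hW2fun]
      _ = a^2 * ∫ ω, (X ω)^4 ∂P + 2*a*b * ∫ ω, (X ω)^3 * Y ω ∂P
            + b^2 * ∫ ω, (X ω)^2 * (Y ω)^2 ∂P := by
          have i1 : Integrable (fun ω => a^2 * (X ω)^4) P := hX4_int.const_mul _
          have i2 : Integrable (fun ω => 2*a*b * ((X ω)^3 * Y ω)) P := hX3Y_int.const_mul _
          have i3 : Integrable (fun ω => b^2 * ((X ω)^2 * (Y ω)^2)) P := hX2Y2_int.const_mul _
          have e1 : ∫ ω, (a^2 * (X ω)^4 + 2*a*b * ((X ω)^3 * Y ω)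
                + b^2 * ((X ω)^2 * (Y ω)^2)) ∂P
              = ∫ ω, (a^2 * (X ω)^4 + 2*a*b * ((X ω)^3 * Y ω)) ∂P
                + ∫ ω, b^2 * ((X ω)^2 * (Y ω)^2) ∂P := integral_add (i1.add i2) i3
          have e2 : ∫ ω, (a^2 * (X ω)^4 + 2*a*b * ((X ω)^3 * Y ω)) ∂P
              = ∫ ω, a^2 * (X ω)^4 ∂P + ∫ ω, 2*a*b * ((X ω)^3 * Y ω) ∂P :=
            integral_add i1 i2
          have m1 : ∫ ω, a^2 * (X ω)^4 ∂P = a^2 * ∫ ω, (X ω)^4 ∂P := integral_const_mul _ _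
          have m2 : ∫ ω, 2*a*b * ((X ω)^3 * Y ω) ∂P
              = 2*a*b * ∫ ω, (X ω)^3 * Y ω ∂P := integral_const_mul _ _
          have m3 : ∫ ω, b^2 * ((X ω)^2 * (Y ω)^2) ∂P
              = b^2 * ∫ ω, (X ω)^2 * (Y ω)^2 ∂P := integral_const_mul _ _
          rw [e1, e2, m1, m2, m3]
      _ = 3*a^2 + b^2 := by rw [h4, h31, h22]; ring
  have hWmem : MemLp W 2 P := by
    rw [memLp_two_iff_integrable_sq hWm.aestronglyMeasurable]
    exact hW2int.congr (Filter.Eventually.of_forall fun ω => by simp [Pi.pow_apply])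
  have hvarW : variance W P = 2*a^2 + b^2 := by
    rw [variance_eq_sub hWmem]
    have : P[W ^ 2] = ∫ ω, (W ω)^2 ∂P := by
      exact integral_congr_ae (Filter.Eventually.of_forall fun ω => by simp [Pi.pow_apply])
    rw [this, EW2, EW]; ring
  -- main estimate
  intro p hp
  have hu_int : Integrable (fun ω => |(X ω)^2 - 1|^p) P :=
    keyXint _ (((measurable_id.pow_const 2).sub_const 1).abs.pow_const p)
      (integrable_abs_sq_sub_one_pow p)
  have hu_val : ∫ ω, |(X ω)^2 - 1|^p ∂P ≤ (3:ℝ)^p * p.factorial := by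
    have h : ∫ ω, |(X ω)^2 - 1|^p ∂P = ∫ x, |x^2 - 1|^p ∂μ01 :=
      keyX (fun x => |x^2 - 1|^p) (((measurable_id.pow_const 2).sub_const 1).abs.pow_const p)
    rw [h]; exact integral_abs_sq_sub_one_pow_le p
  have hv_int : Integrable (fun ω => |X ω|^p * |Y ω|^p) P :=
    prod_int _ _ (measurable_id.abs.pow_const p) (measurable_id.abs.pow_const p)
      (integrable_abs_pow_gaussian01 p) (integrable_abs_pow_gaussian01 p)
  have hv_val : ∫ ω, |X ω|^p * |Y ω|^p ∂P ≤ (2:ℝ)^p * p.factorial := by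
    have h : ∫ ω, |X ω|^p * |Y ω|^p ∂P = (∫ x, |x|^p ∂μ01) * (∫ x, |x|^p ∂μ01) :=
      prod_eq (fun x => |x|^p) (fun x => |x|^p) (measurable_id.abs.pow_const p)
        (measurable_id.abs.pow_const p)
    rw [h]
    have := abs_pow_sq_integral_le p
    nlinarith [this]
  have hv_nonneg : (0:ℝ) ≤ ∫ ω, |X ω|^p * |Y ω|^p ∂P :=
    integral_nonneg fun ω => by positivity
  set s : ℝ := 3*|a| + 2*|b| with hs_def
  have hZm : AEStronglyMeasurable (fun ω => |W ω - a|^p) P :=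
    (((hWm.sub_const a).abs.pow_const p)).aestronglyMeasurable
  have hZnn : ∀ ω, (0:ℝ) ≤ |W ω - a|^p := fun ω => by positivity
  have hZpt : ∀ ω, |W ω - a| ≤ |a| * |(X ω)^2 - 1| + |b| * (|X ω| * |Y ω|) := by
    intro ω
    have h1 : W ω - a = a * ((X ω)^2 - 1) + b * (X ω * Y ω) := by
      simp only [hW]; ring
    rw [h1]
    calc |a * ((X ω)^2 - 1) + b * (X ω * Y ω)|
        ≤ |a * ((X ω)^2 - 1)| + |b * (X ω * Y ω)| := abs_add_le _ _
      _ = |a| * |(X ω)^2 - 1| + |b| * (|X ω| * |Y ω|) := by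
          rw [abs_mul, abs_mul, abs_mul]
  have Ibound : ∫ ω, |W ω - a|^p ∂P ≤ s^p * p.factorial := by
    by_cases ha : a = 0
    · -- W - a = b * X * Y
      have heq : ∀ ω, |W ω - a|^p = |b|^p * (|X ω|^p * |Y ω|^p) := by
        intro ω
        have h1 : W ω - a = b * (X ω * Y ω) := by simp only [hW, ha]; ring
        rw [h1, abs_mul, abs_mul, mul_pow, mul_pow]
      calc ∫ ω, |W ω - a|^p ∂P = |b|^p * ∫ ω, |X ω|^p * |Y ω|^p ∂P := by
            rw [← integral_const_mul]
            exact integral_congr_ae (Filter.Eventually.of_forall heq)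
        _ ≤ |b|^p * ((2:ℝ)^p * p.factorial) :=
            mul_le_mul_of_nonneg_left hv_val (by positivity)
        _ = (2*|b|)^p * p.factorial := by rw [mul_pow]; ring
        _ ≤ s^p * p.factorial := by
            have : (2*|b|) ≤ s := by simp [hs_def, ha]
            have h2 : (2*|b|)^p ≤ s^p := pow_le_pow_left₀ (by positivity) this p
            exact mul_le_mul_of_nonneg_right h2 (by positivity)
    · by_cases hb : b = 0
      · have heq : ∀ ω, |W ω - a|^p = |a|^p * |(X ω)^2 - 1|^p := by
          intro ω
          have h1 : W ω - a = a * ((X ω)^2 - 1) := by simp only [hW, hb]; ring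
          rw [h1, abs_mul, mul_pow]
        calc ∫ ω, |W ω - a|^p ∂P = |a|^p * ∫ ω, |(X ω)^2 - 1|^p ∂P := by
              rw [← integral_const_mul]
              exact integral_congr_ae (Filter.Eventually.of_forall heq)
          _ ≤ |a|^p * ((3:ℝ)^p * p.factorial) :=
              mul_le_mul_of_nonneg_left hu_val (by positivity)
          _ = (3*|a|)^p * p.factorial := by rw [mul_pow]; ring
          _ ≤ s^p * p.factorial := by
              have : (3*|a|) ≤ s := by simp [hs_def, hb]
              have h2 : (3*|a|)^p ≤ s^p := pow_le_pow_left₀ (by positivity) this p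
              exact mul_le_mul_of_nonneg_right h2 (by positivity)
      · -- both nonzero
        set A : ℝ := 3*|a| with hA_def
        set B : ℝ := 2*|b| with hB_def
        have hA : 0 < A := by
          have := abs_pos.2 ha; simp only [hA_def]; linarith
        have hB : 0 < B := by
          have := abs_pos.2 hb; simp only [hB_def]; linarith
        have hsAB : s = A + B := by simp [hs_def, hA_def, hB_def]
        have hs_pos : 0 < s := by rw [hsAB]; linarith
        set c1 : ℝ := (A/s) * (s/A)^p * |a|^p with hc1_def
        set c2 : ℝ := (B/s) * (s/B)^p * |b|^p with hc2_def
        have hc1 : 0 ≤ c1 := by positivity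
        have hc2 : 0 ≤ c2 := by positivity
        have hdom : ∀ ω, |W ω - a|^p
            ≤ c1 * |(X ω)^2 - 1|^p + c2 * (|X ω|^p * |Y ω|^p) := by
          intro ω
          set u : ℝ := |a| * |(X ω)^2 - 1|
          set v : ℝ := |b| * (|X ω| * |Y ω|)
          have hu : 0 ≤ u := by positivity
          have hv : 0 ≤ v := by positivity
          have h1 : |W ω - a|^p ≤ (u + v)^p :=
            pow_le_pow_left₀ (abs_nonneg _) (hZpt ω) p
          have h2 := convex_step p hu hv hA hB
          rw [← hsAB] at h2
          have h3 : (A/s) * (s/A * u)^p = c1 * |(X ω)^2 - 1|^p := by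
            simp only [hc1_def, u]
            rw [mul_pow (s/A), mul_pow |a|]
            ring
          have h4 : (B/s) * (s/B * v)^p = c2 * (|X ω|^p * |Y ω|^p) := by
            simp only [hc2_def, v]
            rw [mul_pow (s/B), mul_pow |b|, mul_pow |X ω|]
            ring
          calc |W ω - a|^p ≤ (u+v)^p := h1
            _ ≤ (A/s) * (s/A * u)^p + (B/s) * (s/B * v)^p := h2
            _ = c1 * |(X ω)^2 - 1|^p + c2 * (|X ω|^p * |Y ω|^p) := by rw [h3, h4]
        have hint_dom : Integrable
            (fun ω => c1 * |(X ω)^2 - 1|^p + c2 * (|X ω|^p * |Y ω|^p)) P :=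
          (hu_int.const_mul c1).add (hv_int.const_mul c2)
        have hmono := integral_mono_of_nonneg
          (Filter.Eventually.of_forall hZnn) hint_dom
          (Filter.Eventually.of_forall hdom)
        have hval : ∫ ω, (c1 * |(X ω)^2 - 1|^p + c2 * (|X ω|^p * |Y ω|^p)) ∂P
            ≤ s^p * p.factorial := by
          rw [integral_add (hu_int.const_mul c1) (hv_int.const_mul c2),
            integral_const_mul, integral_const_mul]
          have e1 : c1 * ((3:ℝ)^p * p.factorial) = (A/s) * s^p * p.factorial := by
            have : (s/A)^p * |a|^p * 3^p = s^p := by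
              rw [← mul_pow, ← mul_pow, show s/A * |a| * 3 = s * (3*|a|) / A by ring]
              rw [← hA_def, mul_div_assoc, div_self hA.ne', mul_one]
            simp only [hc1_def]
            calc (A/s) * (s/A)^p * |a|^p * ((3:ℝ)^p * p.factorial)
                = (A/s) * ((s/A)^p * |a|^p * 3^p) * p.factorial := by ring
              _ = (A/s) * s^p * p.factorial := by rw [this]
          have e2 : c2 * ((2:ℝ)^p * p.factorial) = (B/s) * s^p * p.factorial := by
            have : (s/B)^p * |b|^p * 2^p = s^p := by
              rw [← mul_pow, ← mul_pow, show s/B * |b| * 2 = s * (2*|b|) / B by ring]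
              rw [← hB_def, mul_div_assoc, div_self hB.ne', mul_one]
            simp only [hc2_def]
            calc (B/s) * (s/B)^p * |b|^p * ((2:ℝ)^p * p.factorial)
                = (B/s) * ((s/B)^p * |b|^p * 2^p) * p.factorial := by ring
              _ = (B/s) * s^p * p.factorial := by rw [this]
          calc c1 * ∫ ω, |(X ω)^2 - 1|^p ∂P + c2 * ∫ ω, |X ω|^p * |Y ω|^p ∂P
              ≤ c1 * ((3:ℝ)^p * p.factorial) + c2 * ((2:ℝ)^p * p.factorial) := by
                have t1 := mul_le_mul_of_nonneg_left hu_val hc1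
                have t2 := mul_le_mul_of_nonneg_left hv_val hc2
                linarith
            _ = (A/s) * s^p * p.factorial + (B/s) * s^p * p.factorial := by rw [e1, e2]
            _ = s^p * p.factorial := by
                field_simp
                rw [hsAB]
        exact hmono.trans hval
  -- final arithmetic
  have hs_nonneg : (0:ℝ) ≤ s := by positivity
  have hVarpos : 0 < 2*a^2 + b^2 := by rw [← hvarW]; exact hvar
  have hs2 : s^2 < 10 * variance W P := by
    rw [hvarW]
    have key : s^2 ≤ (17/2) * (2*a^2 + b^2) := by
      have h1 := sq_nonneg (4*|a| - 3*|b|)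
      have h2 : |a|^2 = a^2 := sq_abs a
      have h3 : |b|^2 = b^2 := sq_abs b
      simp only [hs_def]
      nlinarith [abs_nonneg a, abs_nonneg b]
    calc s^2 ≤ (17/2) * (2*a^2 + b^2) := key
      _ < 10 * (2*a^2 + b^2) := by linarith only [hVarpos]
  have hrpow : ((s^2 : ℝ))^((p:ℝ)/2) = s^p := by
    have h2 : (s^2 : ℝ) = s^(2:ℝ) := by
      rw [← Real.rpow_natCast s 2]; norm_num
    rw [h2, ← Real.rpow_mul hs_nonneg]
    rw [show (2:ℝ) * ((p:ℝ)/2) = (p:ℝ) by ring]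
    exact Real.rpow_natCast s p
  calc ∫ ω, |W ω - P[W]|^p ∂P = ∫ ω, |W ω - a|^p ∂P := by rw [EW]
    _ ≤ s^p * p.factorial := Ibound
    _ = ((s^2 : ℝ))^((p:ℝ)/2) * p.factorial := by rw [hrpow]
    _ < (10 * variance W P)^((p:ℝ)/2) * p.factorial := by
        have hlt := Real.rpow_lt_rpow (sq_nonneg s) hs2
          (div_pos (Nat.cast_pos.2 hp) two_pos)
        exact mul_lt_mul_of_pos_right hlt
          (by exact_mod_cast Nat.cast_pos.2 p.factorial_pos)
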